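/- Minimum posterior standard deviation under an SE-type information-gain bound: assume k(x, x) ≤ 1 for all x ∈ X and that the SE-type information-gain hypothesis holds. Then for every integer T ≥ T̄_SE and every sequence x₁, …, x_T ∈ X, min_{t ∈ {1, …, T}} σ(x_t; X_{t−1}) ≤ √T · exp(−(1/2) C̃_SE T^{1/(d+1)}); moreover min_{t ∈ {1, …, T}} σ(x_t; X_{t−1}) ≤ 1 for every T ∈ ℕ₊. -/

import Mathlib

open Matrix

noncomputable section

/-- Gram matrix `K = [k(x_i, x_j)]` of the kernel `k` on the finite family `xs`. -/
def gram {X ι : Type*} [Fintype ι] (k : X → X → ℝ) (xs : ι → X) :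
    Matrix ι ι ℝ := fun i j => k (xs i) (xs j)

/-- Kernel vector `k_t(x) = (k(x₁, x), …, k(x_t, x))`. -/
def kvec {X ι : Type*} [Fintype ι] (k : X → X → ℝ) (xs : ι → X) (x : X) :
    ι → ℝ := fun i => k (xs i) x

/-- Regularized posterior variance `σ²_{λ²}(x; xs) = k(x,x) - k_t(x)ᵀ (K + λ² I)⁻¹ k_t(x)`.
For the empty family this is `k(x,x)`. -/
def postVar {X ι : Type*} [Fintype ι] [DecidableEq ι] (k : X → X → ℝ)
    (xs : ι → X) (lam : ℝ) (x : X) : ℝ :=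
  k x x - kvec k xs x ⬝ᵥ ((gram k xs + lam ^ 2 • (1 : Matrix ι ι ℝ))⁻¹ *ᵥ kvec k xs x)

/-- Noise-free posterior standard deviation `σ(x; xs) = inf_{λ > 0} σ_{λ²}(x; xs)`. -/
def postStd {X ι : Type*} [Fintype ι] [DecidableEq ι] (k : X → X → ℝ)
    (xs : ι → X) (x : X) : ℝ :=
  ⨅ lam : {l : ℝ // 0 < l}, Real.sqrt (postVar k xs lam.1 x)

/-- Maximum information gain `γ_T(λ²) = sup_{x₁,…,x_T} (1/2) ln det (I_T + λ⁻² K_T)`,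
a value in `[0, ∞]`. -/
def mig {X : Type*} (k : X → X → ℝ) (T : ℕ) (lam : ℝ) : ENNReal :=
  ⨆ xs : Fin T → X, ENNReal.ofReal
    ((1 / 2) * Real.log ((1 + (lam ^ 2)⁻¹ • gram k xs).det))

/-- The prefix `X_{t-1} = (x₁, …, x_{t-1})` of a finite sequence (`t` is 0-indexed). -/
def pre {X : Type*} {T : ℕ} (xs : Fin T → X) (t : Fin T) : Fin t.1 → X :=
  fun i => xs ⟨i.1, i.2.trans t.2⟩

/-- Noise-free posterior mean `μ(x; xs) = k_t(x)ᵀ K⁻¹ (f(x₁), …, f(x_t))ᵀ`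
(for the empty family this is `0`). -/
def postMean {X ι : Type*} [Fintype ι] [DecidableEq ι] (k : X → X → ℝ)
    (xs : ι → X) (f : X → ℝ) (x : X) : ℝ :=
  kvec k xs x ⬝ᵥ ((gram k xs)⁻¹ *ᵥ fun i => f (xs i))

/-- Noise-free posterior standard deviation in closed form,
`σ(x; xs) = (k(x,x) - k_t(x)ᵀ K⁻¹ k_t(x))^{1/2}` (for the empty family, `k(x,x)^{1/2}`). -/
def postStdInv {X ι : Type*} [Fintype ι] [DecidableEq ι] (k : X → X → ℝ)
    (xs : ι → X) (x : X) : ℝ :=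
  Real.sqrt (k x x - kvec k xs x ⬝ᵥ ((gram k xs)⁻¹ *ᵥ kvec k xs x))

/-- The first `t` points `X_t = (x₁, …, x_t)` of an infinite sequence. -/
def prefN {X : Type*} (xseq : ℕ → X) (t : ℕ) : Fin t → X := fun i => xseq i

section Aux

variable {X : Type*} {k : X → X → ℝ}

lemma gram_psd (hsym : ∀ x y, k x y = k y x)
    (hpsd : ∀ (n : ℕ) (xv : Fin n → X) (c : Fin n → ℝ),
      0 ≤ ∑ i, ∑ j, c i * c j * k (xv i) (xv j))
    {n : ℕ} (xs : Fin n → X) : (gram k xs).PosSemidef := by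
  refine Matrix.posSemidef_iff_dotProduct_mulVec.2 ⟨?_, ?_⟩
  · ext i j
    simp [Matrix.conjTranspose_apply, _root_.gram, hsym (xs i) (xs j)]
  · intro x
    have h := hpsd n xs x
    have e : star x ⬝ᵥ (gram k xs *ᵥ x) = ∑ i, ∑ j, x i * x j * k (xs i) (xs j) := by
      simp only [dotProduct, Matrix.mulVec, star_trivial, Finset.mul_sum]
      exact Finset.sum_congr rfl fun i _ => Finset.sum_congr rfl fun j _ => by
        simp [_root_.gram]; ring
    rw [e]; exact h

lemma reg_posDef (hsym : ∀ x y, k x y = k y x)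
    (hpsd : ∀ (n : ℕ) (xv : Fin n → X) (c : Fin n → ℝ),
      0 ≤ ∑ i, ∑ j, c i * c j * k (xv i) (xv j))
    {n : ℕ} (xs : Fin n → X) {a : ℝ} (ha : 0 < a) :
    (gram k xs + a • (1 : Matrix (Fin n) (Fin n) ℝ)).PosDef := by
  refine Matrix.PosDef.posSemidef_add (gram_psd hsym hpsd xs) ?_
  rw [Matrix.smul_one_eq_diagonal]
  exact Matrix.posDef_diagonal_iff.2 fun _ => ha

end Aux

section Aux2

variable {X : Type*} {k : X → X → ℝ}

lemma postVar_nonneg (hsym : ∀ x y, k x y = k y x)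
    (hpsd : ∀ (n : ℕ) (xv : Fin n → X) (c : Fin n → ℝ),
      0 ≤ ∑ i, ∑ j, c i * c j * k (xv i) (xv j)) {n : ℕ} (xs : Fin n → X) {lam : ℝ} (hlam : 0 < lam) (x : X) :
    0 ≤ postVar k xs lam x := by
  set M := gram k xs + lam ^ 2 • (1 : Matrix (Fin n) (Fin n) ℝ) with hMdef
  have hMpd : M.PosDef := reg_posDef hsym hpsd xs (by positivity)
  set b := kvec k xs x with hbdef
  set u := M⁻¹ *ᵥ b with hudef
  have hMu : M *ᵥ u = b := by
    rw [hudef, Matrix.mulVec_mulVec,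
      Matrix.mul_nonsing_inv _ (isUnit_iff_ne_zero.2 hMpd.det_pos.ne'), Matrix.one_mulVec]
  have h := hpsd (n+1) (Fin.snoc xs x) (Fin.snoc (fun i => -u i) 1)
  have hrw : ∀ j, k x (xs j) = k (xs j) x := fun j => hsym x (xs j)
  simp only [Fin.sum_univ_castSucc, Fin.snoc_castSucc, Fin.snoc_last, hrw] at h
  have hP : u ⬝ᵥ b = ∑ i, u i * k (xs i) x := by
    simp [dotProduct, hbdef, kvec]
  have h2 : 0 ≤ (∑ i, ∑ j, u i * u j * k (xs i) (xs j)) - 2 * (u ⬝ᵥ b) + k x x := by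
    have e : (∑ i, (∑ j, -u i * -u j * k (xs i) (xs j) + -u i * 1 * k (xs i) x) +
        (∑ i, 1 * -u i * k (xs i) x + 1 * 1 * k x x))
        = (∑ i, ∑ j, u i * u j * k (xs i) (xs j)) - 2 * (u ⬝ᵥ b) + k x x := by
      rw [hP]
      simp only [Finset.sum_add_distrib, neg_mul, mul_neg, neg_neg, one_mul, mul_one,
        Finset.sum_neg_distrib]
      ring
    rw [e] at h
    exact h
  have hSrel : (∑ i, ∑ j, u i * u j * k (xs i) (xs j)) = u ⬝ᵥ b - lam ^ 2 * (u ⬝ᵥ u) := by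
    have e1 : u ⬝ᵥ (gram k xs *ᵥ u) = ∑ i, ∑ j, u i * u j * k (xs i) (xs j) := by
      simp only [dotProduct, Matrix.mulVec, Finset.mul_sum]
      exact Finset.sum_congr rfl fun i _ => Finset.sum_congr rfl fun j _ => by
        simp [_root_.gram]; ring
    have e2 : u ⬝ᵥ (M *ᵥ u) = u ⬝ᵥ (gram k xs *ᵥ u) + lam ^ 2 * (u ⬝ᵥ u) := by
      rw [hMdef, Matrix.add_mulVec, dotProduct_add, Matrix.smul_mulVec,
        Matrix.one_mulVec, dotProduct_smul, smul_eq_mul]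
    rw [hMu] at e2
    rw [← e1]
    linarith
  have huu : 0 ≤ u ⬝ᵥ u := Finset.sum_nonneg fun i _ => mul_self_nonneg _
  have hpv : postVar k xs lam x = k x x - u ⬝ᵥ b := by
    rw [postVar, dotProduct_comm]
  rw [hpv]
  nlinarith [sq_nonneg lam]

lemma postVar_le_diag (hsym : ∀ x y, k x y = k y x)
    (hpsd : ∀ (n : ℕ) (xv : Fin n → X) (c : Fin n → ℝ),
      0 ≤ ∑ i, ∑ j, c i * c j * k (xv i) (xv j)) {n : ℕ}
    (xs : Fin n → X) {lam : ℝ} (hlam : 0 < lam) (x : X) :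
    postVar k xs lam x ≤ k x x := by
  have hMpd : (gram k xs + lam ^ 2 • (1 : Matrix (Fin n) (Fin n) ℝ)).PosDef :=
    reg_posDef hsym hpsd xs (by positivity)
  have h := hMpd.inv.posSemidef.dotProduct_mulVec_nonneg (kvec k xs x)
  rw [star_trivial] at h
  rw [postVar]
  linarith

end Aux2

section Det

variable {X : Type*} {k : X → X → ℝ}

lemma det_step (hsym : ∀ x y, k x y = k y x)
    (hpsd : ∀ (n : ℕ) (xv : Fin n → X) (c : Fin n → ℝ),
      0 ≤ ∑ i, ∑ j, c i * c j * k (xv i) (xv j))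
    {n : ℕ} (xs : Fin (n + 1) → X) {lam : ℝ} (hlam : 0 < lam) :
    (1 + (lam ^ 2)⁻¹ • gram k xs).det
      = (1 + (lam ^ 2)⁻¹ • gram k (fun i : Fin n => xs i.castSucc)).det
        * (1 + (lam ^ 2)⁻¹ *
            postVar k (fun i : Fin n => xs i.castSucc) lam (xs (Fin.last n))) := by
  set c : ℝ := (lam ^ 2)⁻¹ with hc
  have hc0 : 0 < c := by positivity
  set xs' : Fin n → X := fun i => xs i.castSucc with hxs'
  set xL := xs (Fin.last n) with hxL
  set K := gram k xs' with hK
  set M0 := K + lam ^ 2 • (1 : Matrix (Fin n) (Fin n) ℝ) with hM0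
  have hM0pd : M0.PosDef := reg_posDef hsym hpsd xs' (by positivity)
  have hM0det : IsUnit M0.det := isUnit_iff_ne_zero.2 hM0pd.det_pos.ne'
  set A := 1 + c • K with hA
  have hAM : A = c • M0 := by
    rw [hM0, smul_add, smul_smul, hc, inv_mul_cancel₀ (by positivity), one_smul, add_comm]
  have hAinv : A⁻¹ = lam ^ 2 • M0⁻¹ := by
    apply Matrix.inv_eq_right_inv
    rw [hAM, Matrix.smul_mul, Matrix.mul_smul, Matrix.mul_nonsing_inv _ hM0det, smul_smul,
      hc, inv_mul_cancel₀ (by positivity), one_smul]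
  have hAdet : IsUnit A.det := by
    rw [hAM, Matrix.det_smul]
    exact (IsUnit.pow _ (isUnit_iff_ne_zero.2 hc0.ne')).mul hM0det
  have hInv : Invertible A := A.invertibleOfIsUnitDet hAdet
  set B0 : Matrix (Fin n) (Fin 1) ℝ := fun i _ => k (xs' i) xL with hB0
  set C0 : Matrix (Fin 1) (Fin n) ℝ := fun _ j => k xL (xs' j) with hC0
  set D0 : Matrix (Fin 1) (Fin 1) ℝ := fun _ _ => k xL xL with hD0
  have hlastj : ∀ j : Fin 1, Fin.natAdd n j = Fin.last n := fun j => Fin.ext (by simp)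
  have hgsub : (gram k xs).submatrix finSumFinEquiv finSumFinEquiv
      = Matrix.fromBlocks K B0 C0 D0 := by
    ext i j
    cases i with
    | inl i =>
      cases j with
      | inl j => rfl
      | inr j =>
        simp only [Matrix.submatrix_apply, finSumFinEquiv_apply_left, finSumFinEquiv_apply_right,
          Matrix.fromBlocks_apply₁₂, hlastj j]
        rfl
    | inr i =>
      cases j with
      | inl j =>
        simp only [Matrix.submatrix_apply, finSumFinEquiv_apply_left, finSumFinEquiv_apply_right,
          Matrix.fromBlocks_apply₂₁, hlastj i]
        rfl
      | inr j =>
        simp only [Matrix.submatrix_apply, finSumFinEquiv_apply_right,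
          Matrix.fromBlocks_apply₂₂, hlastj i, hlastj j]
        rfl
  have hsub : (1 + c • gram k xs).submatrix finSumFinEquiv finSumFinEquiv
      = Matrix.fromBlocks A (c • B0) (c • C0) (1 + c • D0) := by
    have hsplit : (1 + c • gram k xs).submatrix (⇑finSumFinEquiv) (⇑finSumFinEquiv)
        = (1 : Matrix (Fin (n+1)) (Fin (n+1)) ℝ).submatrix finSumFinEquiv finSumFinEquiv
          + c • (gram k xs).submatrix finSumFinEquiv finSumFinEquiv := rfl
    rw [hsplit, Matrix.submatrix_one_equiv, hgsub, Matrix.fromBlocks_smul, hA,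
      ← Matrix.fromBlocks_one, Matrix.fromBlocks_add]
    simp
  have hquad : (C0 * M0⁻¹ * B0) 0 0 = kvec k xs' xL ⬝ᵥ (M0⁻¹ *ᵥ kvec k xs' xL) := by
    simp only [Matrix.mul_apply]
    simp only [Matrix.mul_apply, dotProduct, Matrix.mulVec, kvec, hB0, hC0,
      Finset.sum_mul, Finset.mul_sum]
    rw [Finset.sum_comm]
    exact Finset.sum_congr rfl fun i _ => Finset.sum_congr rfl fun j _ => by
      rw [hsym xL (xs' i)]; ring
  have hentry : ((1 + c • D0 - c • C0 * A⁻¹ * (c • B0) : Matrix (Fin 1) (Fin 1) ℝ)) 0 0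
      = 1 + c * postVar k xs' lam xL := by
    rw [hAinv]
    have : c • C0 * (lam ^ 2 • M0⁻¹) * (c • B0) = (c * lam ^ 2 * c) • (C0 * M0⁻¹ * B0) := by
      simp only [Matrix.smul_mul, Matrix.mul_smul, smul_smul]
      congr 1
      ring
    rw [this]
    have hcl : c * lam ^ 2 * c = c := by
      rw [hc]; field_simp
    rw [hcl]
    simp only [Matrix.sub_apply, Matrix.add_apply, Matrix.smul_apply, Matrix.one_apply_eq,
      smul_eq_mul, hquad]
    rw [postVar]
    rw [hD0]
    ring_nf
    rfl
  calc (1 + c • gram k xs).det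
      = ((1 + c • gram k xs).submatrix finSumFinEquiv finSumFinEquiv).det :=
        (Matrix.det_submatrix_equiv_self _ _).symm
    _ = (Matrix.fromBlocks A (c • B0) (c • C0) (1 + c • D0)).det := by rw [hsub]
    _ = A.det * ((1 + c • D0) - (c • C0) * ⅟A * (c • B0)).det :=
        Matrix.det_fromBlocks₁₁ _ _ _ _
    _ = A.det * (1 + c * postVar k xs' lam xL) := by
      rw [Matrix.invOf_eq_nonsing_inv, Matrix.det_fin_one, hentry]

end Det

section Chain

variable {X : Type*} {k : X → X → ℝ}

lemma det_chain (hsym : ∀ x y, k x y = k y x)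
    (hpsd : ∀ (n : ℕ) (xv : Fin n → X) (c : Fin n → ℝ),
      0 ≤ ∑ i, ∑ j, c i * c j * k (xv i) (xv j))
    (T : ℕ) (xs : Fin T → X) {lam : ℝ} (hlam : 0 < lam) :
    (1 + (lam ^ 2)⁻¹ • gram k xs).det
      = ∏ t : Fin T, (1 + (lam ^ 2)⁻¹ * postVar k (pre xs t) lam (xs t)) := by
  induction T with
  | zero => simp [Matrix.det_isEmpty]
  | succ n ih =>
    rw [det_step hsym hpsd xs hlam, ih (fun i => xs i.castSucc), Fin.prod_univ_castSucc]
    rfl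

end Chain

set_option maxHeartbeats 2000000 in
/-- Minimum posterior standard deviation under an SE-type information-gain bound. -/
theorem min_postStd_se
{X : Type*} [Nonempty X] (k : X → X → ℝ)
    (hsym : ∀ x y : X, k x y = k y x)
    (hpsd : ∀ (n : ℕ) (xv : Fin n → X) (c : Fin n → ℝ),
      0 ≤ ∑ i, ∑ j, c i * c j * k (xv i) (xv j))
    (hk1 : ∀ x : X, k x x ≤ 1)
    (CSE lamBar : ℝ) (hCSE : 0 < CSE) (hlamBar : 0 < lamBar)
    (T0 : ℕ) (hT0 : 2 ≤ T0) (d : ℕ) (hd : 1 ≤ d)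
    (hgain : ∀ lam : ℝ, 0 < lam → lam ≤ lamBar → ∀ t : ℕ, T0 ≤ t →
      mig k t lam ≤ ENNReal.ofReal (CSE * Real.log ((t : ℝ) / lam ^ 2) ^ (d + 1)))
    (Ctil : ℝ) (hCtil : Ctil = (6 * CSE) ^ (-(1 : ℝ) / ((d : ℝ) + 1)))
    (Tlam : ℕ) (hTlam : ∀ t : ℕ, Tlam ≤ t →
      (t : ℝ) * Real.exp (-(Ctil * (t : ℝ) ^ ((1 : ℝ) / ((d : ℝ) + 1)))) ≤ lamBar ^ 2)
    (TSE : ℕ)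
    (hTSE : TSE = max T0 (max Tlam
      (⌈((d : ℝ) + 1) ^ (d + 1) / Ctil ^ (d + 1)⌉₊ + 1))) :
    (∀ T : ℕ, TSE ≤ T → ∀ xs : Fin T → X,
        sInf (Set.range fun t : Fin T => postStd k (pre xs t) (xs t)) ≤
          Real.sqrt (T : ℝ) *
            Real.exp (-(1 / 2) * Ctil * (T : ℝ) ^ ((1 : ℝ) / ((d : ℝ) + 1)))) ∧
      ∀ T : ℕ, 0 < T → ∀ xs : Fin T → X,
        sInf (Set.range fun t : Fin T => postStd k (pre xs t) (xs t)) ≤ 1 := by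
  have hstd_nonneg : ∀ {m : ℕ} (ys : Fin m → X) (x : X), 0 ≤ postStd k ys x := by
    intro m ys x
    show 0 ≤ ⨅ lam : {l : ℝ // 0 < l}, Real.sqrt (postVar k ys lam.1 x)
    exact Real.iInf_nonneg fun l => Real.sqrt_nonneg _
  have hb : ∀ (T : ℕ) (xs : Fin T → X),
      BddBelow (Set.range fun t : Fin T => postStd k (pre xs t) (xs t)) := by
    intro T xs
    refine ⟨0, ?_⟩
    rintro y ⟨t, rfl⟩
    exact hstd_nonneg _ _
  have hstd_le : ∀ {m : ℕ} (ys : Fin m → X) (x : X) (lam : ℝ), 0 < lam →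
      postStd k ys x ≤ Real.sqrt (postVar k ys lam x) := by
    intro m ys x lam h
    show (⨅ l : {l : ℝ // 0 < l}, Real.sqrt (postVar k ys l.1 x))
        ≤ Real.sqrt (postVar k ys lam x)
    exact ciInf_le ⟨0, by rintro z ⟨l, rfl⟩; exact Real.sqrt_nonneg _⟩
      (⟨lam, h⟩ : {l : ℝ // 0 < l})
  constructor
  · -- main bound
    intro T hT xs
    have hT0T : T0 ≤ T := le_trans (hTSE ▸ le_max_left _ _) hT
    have hTlamT : Tlam ≤ T :=
      le_trans (hTSE ▸ le_trans (le_max_left _ _) (le_max_right _ _)) hT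
    have hTpos : 0 < T := lt_of_lt_of_le (by omega) hT0T
    have hTR : (0:ℝ) < (T:ℝ) := by exact_mod_cast hTpos
    set r : ℝ := (1:ℝ)/((d:ℝ)+1) with hr
    set y : ℝ := Ctil * (T:ℝ) ^ r with hy
    have hCtil0 : 0 < Ctil := by
      rw [hCtil]; exact Real.rpow_pos_of_pos (by positivity) _
    have hy0 : 0 < y := mul_pos hCtil0 (Real.rpow_pos_of_pos hTR _)
    set l2 : ℝ := (T:ℝ) * Real.exp (-y) with hl2
    have hl20 : 0 < l2 := by positivity
    set lam := Real.sqrt l2 with hlamdef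
    have hlam0 : 0 < lam := Real.sqrt_pos.2 hl20
    have hlamsq : lam ^ 2 = l2 := Real.sq_sqrt hl20.le
    have hlamle : lam ≤ lamBar := by
      have h1 := hTlam T hTlamT
      have h2 : l2 ≤ lamBar ^ 2 := h1
      calc lam ≤ Real.sqrt (lamBar ^ 2) := Real.sqrt_le_sqrt h2
        _ = lamBar := Real.sqrt_sq hlamBar.le
    have hlog : Real.log ((T:ℝ) / lam ^ 2) = y := by
      rw [hlamsq, hl2, show (T:ℝ) / ((T:ℝ) * Real.exp (-y)) = Real.exp y from by
        rw [Real.exp_neg]; field_simp]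
      exact Real.log_exp y
    have hm := hgain lam hlam0 hlamle T hT0T
    have hle1 : ENNReal.ofReal ((1/2) * Real.log ((1 + (lam^2)⁻¹ • gram k xs).det))
        ≤ ENNReal.ofReal (CSE * Real.log ((T:ℝ)/lam^2) ^ (d+1)) :=
      le_trans (le_iSup (fun xs : Fin T → X => ENNReal.ofReal
        ((1 / 2) * Real.log ((1 + (lam ^ 2)⁻¹ • gram k xs).det))) xs) hm
    have hrhs0 : 0 ≤ CSE * Real.log ((T:ℝ)/lam^2) ^ (d+1) := by
      rw [hlog]; positivity
    have hreal : (1/2) * Real.log ((1 + (lam^2)⁻¹ • gram k xs).det)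
        ≤ CSE * Real.log ((T:ℝ)/lam^2) ^ (d+1) :=
      (ENNReal.ofReal_le_ofReal_iff hrhs0).1 hle1
    have hfacpos : ∀ t : Fin T,
        0 < 1 + (lam^2)⁻¹ * postVar k (pre xs t) lam (xs t) := by
      intro t
      have h0 := postVar_nonneg hsym hpsd (pre xs t) hlam0 (xs t)
      have hls : (0:ℝ) < lam ^ 2 := by positivity
      positivity
    have hlogdet : Real.log ((1 + (lam^2)⁻¹ • gram k xs).det)
        = ∑ t, Real.log (1 + (lam^2)⁻¹ * postVar k (pre xs t) lam (xs t)) := by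
      rw [det_chain hsym hpsd T xs hlam0, Real.log_prod]
      exact fun t _ => (hfacpos t).ne'
    have hC : Ctil ^ (d+1) = (6*CSE)⁻¹ := by
      rw [hCtil, ← Real.rpow_natCast ((6*CSE) ^ (-(1:ℝ)/((d:ℝ)+1))) (d+1),
        ← Real.rpow_mul (by positivity),
        show (-(1:ℝ)/((d:ℝ)+1)) * ((d+1 : ℕ):ℝ) = -1 by push_cast; field_simp,
        Real.rpow_neg_one]
    have hTr : ((T:ℝ) ^ r) ^ (d+1) = (T:ℝ) := by
      rw [← Real.rpow_natCast ((T:ℝ) ^ r) (d+1), ← Real.rpow_mul (Nat.cast_nonneg T),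
        show r * ((d+1 : ℕ):ℝ) = 1 by rw [hr]; push_cast; field_simp,
        Real.rpow_one]
    have hyT : CSE * y ^ (d+1) = (T:ℝ)/6 := by
      rw [hy, mul_pow, hC, hTr]
      field_simp
    have hsum : ∑ t, Real.log (1 + (lam^2)⁻¹ * postVar k (pre xs t) lam (xs t))
        ≤ (T:ℝ)/3 := by
      rw [hlogdet, hlog, hyT] at hreal
      linarith
    have hex : ∃ t : Fin T,
        Real.log (1 + (lam^2)⁻¹ * postVar k (pre xs t) lam (xs t)) ≤ 1/3 := by
      by_contra hcon
      push_neg at hcon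
      have hlt : (T:ℝ)/3 < ∑ t, Real.log (1 + (lam^2)⁻¹ * postVar k (pre xs t) lam (xs t)) := by
        calc (T:ℝ)/3 = ∑ _t : Fin T, (1/3 : ℝ) := by
              simp [Finset.sum_const, Finset.card_univ]
              ring
          _ < _ := Finset.sum_lt_sum_of_nonempty
              (Finset.univ_nonempty_iff.2 ⟨⟨0, hTpos⟩⟩) fun t _ => hcon t
      linarith
    obtain ⟨t, ht⟩ := hex
    have hpv0 := postVar_nonneg hsym hpsd (pre xs t) hlam0 (xs t)
    have hexp : 1 + (lam^2)⁻¹ * postVar k (pre xs t) lam (xs t) ≤ Real.exp (1/3) := by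
      calc 1 + (lam^2)⁻¹ * postVar k (pre xs t) lam (xs t)
          = Real.exp (Real.log (1 + (lam^2)⁻¹ * postVar k (pre xs t) lam (xs t))) :=
            (Real.exp_log (hfacpos t)).symm
        _ ≤ Real.exp (1/3) := Real.exp_le_exp.2 ht
    have he13 : Real.exp (1/3:ℝ) ≤ 2 := by
      have h1 : Real.exp (1/3:ℝ) ^ 3 = Real.exp 1 := by
        rw [← Real.exp_nat_mul]; norm_num
      nlinarith [Real.exp_one_lt_d9, Real.exp_pos (1/3:ℝ),
        sq_nonneg (Real.exp (1/3:ℝ) - 2), sq_nonneg (Real.exp (1/3:ℝ) + 2)]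
    have hpvle : postVar k (pre xs t) lam (xs t) ≤ lam ^ 2 := by
      have hls : (0:ℝ) < lam ^ 2 := by positivity
      have h2 : (lam^2)⁻¹ * postVar k (pre xs t) lam (xs t) ≤ 1 := by linarith
      calc postVar k (pre xs t) lam (xs t)
          = lam^2 * ((lam^2)⁻¹ * postVar k (pre xs t) lam (xs t)) := by
            field_simp
        _ ≤ lam^2 * 1 := by exact mul_le_mul_of_nonneg_left h2 hls.le
        _ = lam^2 := mul_one _
    have hsqrtexp : Real.sqrt (Real.exp (-y)) = Real.exp (-(1/2) * Ctil * (T:ℝ) ^ r) := by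
      have h1 : (Real.exp (-(1/2) * Ctil * (T:ℝ) ^ r)) ^ 2 = Real.exp (-y) := by
        rw [sq, ← Real.exp_add, hy]; ring_nf
      rw [← h1, Real.sqrt_sq (Real.exp_nonneg _)]
    have hfin : postStd k (pre xs t) (xs t)
        ≤ Real.sqrt (T:ℝ) * Real.exp (-(1/2) * Ctil * (T:ℝ) ^ r) := by
      calc postStd k (pre xs t) (xs t)
          ≤ Real.sqrt (postVar k (pre xs t) lam (xs t)) := hstd_le _ _ lam hlam0
        _ ≤ Real.sqrt (lam ^ 2) := Real.sqrt_le_sqrt hpvle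
        _ = lam := Real.sqrt_sq hlam0.le
        _ = Real.sqrt (T:ℝ) * Real.sqrt (Real.exp (-y)) := by
            rw [hlamdef, hl2, Real.sqrt_mul (Nat.cast_nonneg T)]
        _ = Real.sqrt (T:ℝ) * Real.exp (-(1/2) * Ctil * (T:ℝ) ^ r) := by rw [hsqrtexp]
    exact (csInf_le (hb T xs) ⟨t, rfl⟩).trans hfin
  · -- trivial bound
    intro T hT xs
    refine (csInf_le (hb T xs) ⟨⟨0, hT⟩, rfl⟩).trans ?_
    calc postStd k (pre xs ⟨0, hT⟩) (xs ⟨0, hT⟩)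
        ≤ Real.sqrt (postVar k (pre xs ⟨0, hT⟩) 1 (xs ⟨0, hT⟩)) :=
          hstd_le _ _ 1 one_pos
      _ ≤ Real.sqrt 1 := Real.sqrt_le_sqrt
          ((postVar_le_diag hsym hpsd _ one_pos _).trans (hk1 _))
      _ = 1 := Real.sqrt_one
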